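/- For the synchronous dynamics with initial configuration σ⁰ distributed according to P_{1/2}: for every site x of ℍ and every n ≥ 1, the expected cardinality of the cluster of x at time n is infinite, i.e. E_{P_{1/2}}[|C_x(n)|] = ∞. -/

import Mathlib

open MeasureTheory ENNReal

/-- Sites of the hexagonal (honeycomb) lattice ℍ, coordinatized by ℤ × ℤ. -/
abbrev Site : Type := ℤ × ℤ

/-- A spin configuration: `true` stands for spin +1, `false` for spin −1. -/
abbrev Config : Type := Site → Bool

/-- The three neighbors of a site: `(i,j)` is adjacent to `(i−1,j)`, `(i+1,j)`, and to
`(i,j+1)` if `i+j` is even, to `(i,j−1)` if `i+j` is odd. -/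
def nbrs (x : Site) : List Site :=
  [(x.1 - 1, x.2), (x.1 + 1, x.2),
   if Even (x.1 + x.2) then (x.1, x.2 + 1) else (x.1, x.2 - 1)]

/-- Adjacency in the hexagonal lattice. -/
def Adj (x y : Site) : Prop := y ∈ nbrs x

instance : DecidableRel Adj := fun x y => by unfold Adj; infer_instance

/-- The majority value among the three spins `σ y`, `y ∈ N(x)`. -/
def maj (σ : Config) (x : Site) : Bool :=
  decide (2 ≤ (nbrs x).countP (fun y => σ y))

/-- One step of the synchronous dynamics: at even times `n` all sites of the sublattice
`A = {x : i+j odd}` are simultaneously updated to the majority value of their neighbors;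
at odd times the sites of `B = {x : i+j even}` are updated. -/
def syncStep (n : ℕ) (σ : Config) : Config := fun x =>
  if (Even n ∧ ¬ Even (x.1 + x.2)) ∨ (¬ Even n ∧ Even (x.1 + x.2)) then maj σ x
  else σ x

/-- The synchronous dynamics: `evolve σ0 n` is the configuration σⁿ. -/
def evolve (σ0 : Config) : ℕ → Config
  | 0 => σ0
  | n + 1 => syncStep n (evolve σ0 n)

/-- `P` is the i.i.d. Bernoulli(λ) product measure on configurations:
a probability measure giving each finite cylinder its product probability,
where each site is `+1` (i.e. `true`) with probability λ. -/
def IsBernoulliProduct (l : ℝ) (P : Measure Config) : Prop :=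
  IsProbabilityMeasure P ∧
    ∀ (s : Finset Site) (f : Site → Bool),
      P {σ : Config | ∀ x ∈ s, σ x = f x} =
        ∏ x ∈ s, ENNReal.ofReal (if f x then l else 1 - l)

/-- The cluster of `x` in `σ`: the connected component of `x` in the subgraph of ℍ induced
by the sites carrying the same spin as `x`. -/
def cluster (σ : Config) (x : Site) : Set Site :=
  {y | Relation.ReflTransGen (fun a b => Adj a b ∧ σ b = σ x) x y}

/-- `σ` has an infinite cluster of spin `s` (`true` = +1, `false` = −1). -/
def HasInfiniteCluster (σ : Config) (s : Bool) : Prop :=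
  ∃ x, σ x = s ∧ (cluster σ x).Infinite

namespace Stmt2Aux

lemma mem_nbrs {x y : Site} : Adj x y ↔
    y = (x.1 - 1, x.2) ∨ y = (x.1 + 1, x.2) ∨
      y = (if Even (x.1 + x.2) then (x.1, x.2 + 1) else (x.1, x.2 - 1)) := by
  simp [Adj, nbrs]

lemma adj_parity {x y : Site} (h : Adj x y) : ¬ (Even (x.1 + x.2) ↔ Even (y.1 + y.2)) := by
  by_cases hp : Even (x.1 + x.2)
  · rcases mem_nbrs.mp h with h | h | h
    · subst h; simp only [Int.even_iff] at *; omega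
    · subst h; simp only [Int.even_iff] at *; omega
    · rw [if_pos hp] at h; subst h; simp only [Int.even_iff] at *; omega
  · rcases mem_nbrs.mp h with h | h | h
    · subst h; simp only [Int.even_iff] at *; omega
    · subst h; simp only [Int.even_iff] at *; omega
    · rw [if_neg hp] at h; subst h; simp only [Int.even_iff] at *; omega

lemma adj_symm {x y : Site} (h : Adj x y) : Adj y x := by
  by_cases hp : Even (x.1 + x.2)
  · rcases mem_nbrs.mp h with h | h | h
    · subst h; rw [mem_nbrs]; right; left; simp
    · subst h; rw [mem_nbrs]; left; simp
    · rw [if_pos hp] at h; subst h; rw [mem_nbrs]; right; right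
      rw [if_neg (by simp only [Int.even_iff] at *; omega)]; simp
  · rcases mem_nbrs.mp h with h | h | h
    · subst h; rw [mem_nbrs]; right; left; simp
    · subst h; rw [mem_nbrs]; left; simp
    · rw [if_neg hp] at h; subst h; rw [mem_nbrs]; right; right
      rw [if_pos (by simp only [Int.even_iff] at *; omega)]; simp

lemma two_of_three {t1 t2 t3 s : Bool}
    (h : (t1 = s ∧ t2 = s) ∨ (t1 = s ∧ t3 = s) ∨ (t2 = s ∧ t3 = s)) :
    decide (2 ≤ ((if t1 then 1 else 0) +
      ((if t2 then 1 else 0) + ((if t3 then 1 else 0) + 0)) : ℕ)) = s := by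
  revert h; revert t1 t2 t3 s; decide

/-- the two-of-three majority lemma -/
lemma maj_eq_of_two {σ : Config} {z a b : Site} {s : Bool} (ha : Adj z a) (hb : Adj z b)
    (hab : a ≠ b) (hsa : σ a = s) (hsb : σ b = s) : maj σ z = s := by
  classical
  set c : Site := if Even (z.1 + z.2) then (z.1, z.2 + 1) else (z.1, z.2 - 1) with hc
  have hmaj : maj σ z = decide (2 ≤ ((if σ (z.1-1, z.2) then 1 else 0) +
      ((if σ (z.1+1, z.2) then 1 else 0) + ((if σ c then 1 else 0) + 0)) : ℕ)) := by
    simp only [maj, nbrs, List.countP_cons, List.countP_nil, ← hc]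
    congr 1
    rcases σ (z.1-1,z.2) <;> rcases σ (z.1+1,z.2) <;> rcases σ c <;> simp <;> omega
  have ha' := mem_nbrs.mp ha
  have hb' := mem_nbrs.mp hb
  rw [← hc] at ha' hb'
  rcases ha' with h|h|h <;> rcases hb' with h'|h'|h' <;>
    first
      | exact absurd (h.trans h'.symm) hab
      | (subst h; subst h'; rw [hmaj]; exact two_of_three (by tauto))



/-! ### dynamics -/

/-- `updAt k z`: site `z` is updated at step `k`. -/
def updAt (k : ℕ) (z : Site) : Prop :=
  (Even k ∧ ¬ Even (z.1 + z.2)) ∨ (¬ Even k ∧ Even (z.1 + z.2))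

lemma updAt_iff {k : ℕ} {z : Site} : updAt k z ↔ ¬ (Even k ↔ Even (z.1 + z.2)) := by
  unfold updAt; tauto

lemma evolve_eq_maj {σ0 : Config} {k : ℕ} {z : Site} (h : updAt k z) :
    evolve σ0 (k+1) z = maj (evolve σ0 (k+1)) z := by
  unfold updAt at h
  have h1 : evolve σ0 (k+1) z = maj (evolve σ0 k) z := by
    show syncStep k (evolve σ0 k) z = _
    unfold syncStep; rw [if_pos h]
  rw [h1]
  unfold maj
  congr 1
  rw [List.countP_congr]
  intro y hy
  have hadj : Adj z y := hy
  have hy' : ¬ ((Even k ∧ ¬ Even (y.1 + y.2)) ∨ (¬ Even k ∧ Even (y.1 + y.2))) := by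
    have := adj_parity hadj
    tauto
  have : evolve σ0 (k+1) y = evolve σ0 k y := by
    show syncStep k (evolve σ0 k) y = _
    unfold syncStep; rw [if_neg hy']
  rw [this]

lemma evolve_not_upd {σ0 : Config} {k : ℕ} {z : Site} (h : ¬ updAt k z) :
    evolve σ0 (k+1) z = evolve σ0 k z := by
  unfold updAt at h
  show syncStep k (evolve σ0 k) z = _
  unfold syncStep; rw [if_neg h]

/-! ### triangular sublattice -/

def D6 : List Site := [(2,0),(-2,0),(1,1),(-1,-1),(1,-1),(-1,1)]

def triAdj (u v : Site) : Prop := (v.1 - u.1, v.2 - u.2) ∈ D6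

lemma triAdj_cases {u v : Site} (h : triAdj u v) :
    v = (u.1+2, u.2) ∨ v = (u.1-2, u.2) ∨ v = (u.1+1, u.2+1) ∨ v = (u.1-1, u.2-1) ∨
    v = (u.1+1, u.2-1) ∨ v = (u.1-1, u.2+1) := by
  simp only [triAdj, D6, List.mem_cons, Prod.mk.injEq, List.not_mem_nil, or_false] at h
  rcases v with ⟨a, b⟩; rcases u with ⟨i, j⟩
  simp only [Prod.mk.injEq]
  omega

lemma triAdj_parity {u v : Site} (h : triAdj u v) : Even (u.1 + u.2) ↔ Even (v.1 + v.2) := by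
  rcases triAdj_cases h with h|h|h|h|h|h <;> subst h <;> simp [Int.even_iff] <;> omega

lemma triAdj_ne {u v : Site} (h : triAdj u v) : u ≠ v := by
  intro he; subst he
  rcases triAdj_cases h with h|h|h|h|h|h <;> (rw [Prod.ext_iff] at h; omega)

lemma adj_left (z : Site) : Adj z (z.1 - 1, z.2) := by rw [mem_nbrs]; left; rfl
lemma adj_right (z : Site) : Adj z (z.1 + 1, z.2) := by rw [mem_nbrs]; right; left; rfl
lemma adj_up (z : Site) (h : Even (z.1 + z.2)) : Adj z (z.1, z.2 + 1) := by
  rw [mem_nbrs]; right; right; rw [if_pos h]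
lemma adj_down (z : Site) (h : ¬ Even (z.1 + z.2)) : Adj z (z.1, z.2 - 1) := by
  rw [mem_nbrs]; right; right; rw [if_neg h]

lemma adjc {z y y' : Site} (h : Adj z y) (e : y = y') : Adj z y' := e ▸ h

/-- any two triangular-adjacent sites have a common honeycomb neighbor. -/
lemma triAdj_common {u v : Site} (h : triAdj u v) : ∃ z, Adj z u ∧ Adj z v := by
  obtain ⟨i, j⟩ := u
  by_cases hp : Even (i + j) <;>
    rcases triAdj_cases h with h|h|h|h|h|h <;> subst h <;>
    simp only [Int.even_iff] at hp
  -- u even cases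
  · exact ⟨(i+1, j), adjc (adj_left (i+1, j)) (by refine Prod.ext ?_ ?_ <;> simp <;> omega),
      adjc (adj_right (i+1, j)) (by refine Prod.ext ?_ ?_ <;> simp <;> omega)⟩
  · exact ⟨(i-1, j), adjc (adj_right (i-1, j)) (by refine Prod.ext ?_ ?_ <;> simp <;> omega),
      adjc (adj_left (i-1, j)) (by refine Prod.ext ?_ ?_ <;> simp <;> omega)⟩
  · exact ⟨(i, j+1), adjc (adj_down (i, j+1) (by simp [Int.even_iff] <;> omega))
        (by refine Prod.ext ?_ ?_ <;> simp <;> omega),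
      adjc (adj_right (i, j+1)) (by refine Prod.ext ?_ ?_ <;> simp <;> omega)⟩
  · exact ⟨(i-1, j), adjc (adj_right (i-1, j)) (by refine Prod.ext ?_ ?_ <;> simp <;> omega),
      adjc (adj_down (i-1, j) (by simp [Int.even_iff] <;> omega)) (by refine Prod.ext ?_ ?_ <;> simp <;> omega)⟩
  · exact ⟨(i+1, j), adjc (adj_left (i+1, j)) (by refine Prod.ext ?_ ?_ <;> simp <;> omega),
      adjc (adj_down (i+1, j) (by simp [Int.even_iff] <;> omega)) (by refine Prod.ext ?_ ?_ <;> simp <;> omega)⟩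
  · exact ⟨(i, j+1), adjc (adj_down (i, j+1) (by simp [Int.even_iff] <;> omega))
        (by refine Prod.ext ?_ ?_ <;> simp <;> omega),
      adjc (adj_left (i, j+1)) (by refine Prod.ext ?_ ?_ <;> simp <;> omega)⟩
  -- u odd cases
  · exact ⟨(i+1, j), adjc (adj_left (i+1, j)) (by refine Prod.ext ?_ ?_ <;> simp <;> omega),
      adjc (adj_right (i+1, j)) (by refine Prod.ext ?_ ?_ <;> simp <;> omega)⟩
  · exact ⟨(i-1, j), adjc (adj_right (i-1, j)) (by refine Prod.ext ?_ ?_ <;> simp <;> omega),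
      adjc (adj_left (i-1, j)) (by refine Prod.ext ?_ ?_ <;> simp <;> omega)⟩
  · exact ⟨(i+1, j), adjc (adj_left (i+1, j)) (by refine Prod.ext ?_ ?_ <;> simp <;> omega),
      adjc (adj_up (i+1, j) (by simp [Int.even_iff] <;> omega)) (by refine Prod.ext ?_ ?_ <;> simp <;> omega)⟩
  · exact ⟨(i, j-1), adjc (adj_up (i, j-1) (by simp [Int.even_iff] <;> omega))
        (by refine Prod.ext ?_ ?_ <;> simp <;> omega),
      adjc (adj_left (i, j-1)) (by refine Prod.ext ?_ ?_ <;> simp <;> omega)⟩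
  · exact ⟨(i, j-1), adjc (adj_up (i, j-1) (by simp [Int.even_iff] <;> omega))
        (by refine Prod.ext ?_ ?_ <;> simp <;> omega),
      adjc (adj_right (i, j-1)) (by refine Prod.ext ?_ ?_ <;> simp <;> omega)⟩
  · exact ⟨(i-1, j), adjc (adj_right (i-1, j)) (by refine Prod.ext ?_ ?_ <;> simp <;> omega),
      adjc (adj_up (i-1, j) (by simp [Int.even_iff] <;> omega)) (by refine Prod.ext ?_ ?_ <;> simp <;> omega)⟩



/-! ### lifting triangular paths into honeycomb clusters -/

lemma cluster_of_triReach {w : Config} {k : ℕ} {x a y : Site}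
    (hmaj : ∀ z, updAt k z → w z = maj w z)
    (haL : ¬ updAt k a)
    (hx : Relation.ReflTransGen (fun p q => Adj p q ∧ w q = w x) x a)
    (hwa : w a = w x)
    (hreach : Relation.ReflTransGen (fun u v => triAdj u v ∧ w v = w a) a y) :
    y ∈ cluster w x := by
  have main : ¬ updAt k y ∧ w y = w x ∧
      Relation.ReflTransGen (fun p q => Adj p q ∧ w q = w x) x y := by
    induction hreach with
    | refl => exact ⟨haL, hwa, hx⟩
    | tail hab hbc ih =>
      rename_i b v
      obtain ⟨hL, hwb, hxb⟩ := ih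
      obtain ⟨hadj, hwv⟩ := hbc
      have hvL : ¬ updAt k v := by
        have := triAdj_parity hadj
        rw [updAt_iff] at *
        tauto
      have hwvx : w v = w x := by rw [hwv, hwa]
      obtain ⟨z, hzb, hzv⟩ := triAdj_common hadj
      have hzupd : updAt k z := by
        have := adj_parity hzb
        rw [updAt_iff] at *
        tauto
      have hwz : w z = w x := by
        rw [hmaj z hzupd]
        exact maj_eq_of_two hzb hzv (triAdj_ne hadj) hwb hwvx
      exact ⟨hvL, hwvx, (hxb.tail ⟨adj_symm hzb, hwz⟩).tail ⟨hzv, hwvx⟩⟩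
  exact main.2.2

/-! ### the game of Y on the abstract triangular lattice -/

def dirsA : List (ℤ × ℤ) := [(1,0),(-1,0),(0,1),(0,-1),(1,-1),(-1,1)]

def adjA (u v : ℤ × ℤ) : Prop := (v.1 - u.1, v.2 - u.2) ∈ dirsA

lemma adjA_cases {u v : ℤ × ℤ} (h : adjA u v) :
    v = (u.1+1, u.2) ∨ v = (u.1-1, u.2) ∨ v = (u.1, u.2+1) ∨ v = (u.1, u.2-1) ∨
    v = (u.1+1, u.2-1) ∨ v = (u.1-1, u.2+1) := by
  simp only [adjA, dirsA, List.mem_cons, Prod.mk.injEq, List.not_mem_nil, or_false] at h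
  rcases v with ⟨a, b⟩; rcases u with ⟨i, j⟩
  simp only [Prod.mk.injEq]
  omega

lemma adjA_symm {u v : ℤ × ℤ} (h : adjA u v) : adjA v u := by
  rcases adjA_cases h with rfl|rfl|rfl|rfl|rfl|rfl <;> simp [adjA, dirsA] <;> omega

def connA (c : ℤ × ℤ → Bool) (s : Bool) (u v : ℤ × ℤ) : Prop :=
  Relation.ReflTransGen (fun p q => adjA p q ∧ c q = s) u v

lemma connA_symm {c : ℤ × ℤ → Bool} {s : Bool} {a b : ℤ × ℤ}
    (h : connA c s a b) (ha : c a = s) : connA c s b a := by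
  have : connA c s b a ∧ c b = s := by
    induction h with
    | refl => exact ⟨.refl, ha⟩
    | tail hab hbc ih =>
      exact ⟨Relation.ReflTransGen.head ⟨adjA_symm hbc.1, ih.2⟩ ih.1, hbc.2⟩
  exact this.1

def triCells (u : ℤ × ℤ) : List (ℤ × ℤ) := [u, (u.1+1, u.2), (u.1, u.2+1)]

def redc (c : ℤ × ℤ → Bool) (u : ℤ × ℤ) : Bool :=
  (c u && c (u.1+1, u.2)) || (c u && c (u.1, u.2+1)) || (c (u.1+1, u.2) && c (u.1, u.2+1))

lemma redc_two {c : ℤ × ℤ → Bool} {u : ℤ × ℤ} {s : Bool} (h : redc c u = s) :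
    (c u = s ∧ c (u.1+1, u.2) = s) ∨ (c u = s ∧ c (u.1, u.2+1) = s) ∨
      (c (u.1+1, u.2) = s ∧ c (u.1, u.2+1) = s) := by
  subst h
  rcases h1 : c u <;> rcases h2 : c (u.1+1, u.2) <;> rcases h3 : c (u.1, u.2+1) <;>
    simp [redc, h1, h2, h3]

lemma cliqueA {c : ℤ × ℤ → Bool} {s : Bool} {u a b : ℤ × ℤ}
    (ha : a ∈ triCells u) (hb : b ∈ triCells u) (hca : c a = s) (hcb : c b = s) :
    connA c s a b := by
  simp only [triCells, List.mem_cons, List.not_mem_nil, or_false] at ha hb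
  rcases ha with rfl | rfl | rfl <;> rcases hb with h | h | h <;>
    first
      | (rw [h]; exact .refl)
      | (rw [h] at hcb ⊢; exact .single ⟨by simp [adjA, dirsA] <;> omega, hcb⟩)
      | (rw [h] at hcb ⊢; exact .single ⟨by simp [adjA, dirsA] <;> omega, hcb⟩)

lemma bridge {c : ℤ × ℤ → Bool} {s : Bool} {u v : ℤ × ℤ}
    (h : adjA u v) (hu : redc c u = s) (hv : redc c v = s) :
    ∃ a ∈ triCells u, ∃ b ∈ triCells v, c a = s ∧ c b = s ∧ connA c s a b := by
  have hu2 := redc_two hu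
  have hv2 := redc_two hv
  have hmem : ∀ z : ℤ × ℤ, z ∈ triCells z ∧ (z.1+1, z.2) ∈ triCells z ∧
      (z.1, z.2+1) ∈ triCells z := by intro z; simp [triCells]
  rcases adjA_cases h with rfl|rfl|rfl|rfl|rfl|rfl
  -- v = u + (1,0) : shared cell (u.1+1, u.2) = v
  · by_cases hg : c (u.1+1, u.2) = s
    · exact ⟨(u.1+1, u.2), (hmem u).2.1, (u.1+1, u.2), (hmem _).1, hg, hg, .refl⟩
    · have h1 : c u = s ∧ c (u.1, u.2+1) = s := by tauto
      have h2 : c ((u.1+1)+1, u.2) = s ∧ c (u.1+1, u.2+1) = s := by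
        rcases hv2 with h'|h'|h' <;> simp_all
      exact ⟨(u.1, u.2+1), (hmem u).2.2, (u.1+1, u.2+1), (hmem _).2.2, h1.2, h2.2,
        .single ⟨by simp [adjA, dirsA] <;> omega, h2.2⟩⟩
  -- v = u - (1,0) : use symmetry manually: shared cell u = (v.1+1, v.2)
  · by_cases hg : c u = s
    · exact ⟨u, (hmem u).1, u, by simp [triCells] <;> omega, hg, hg, .refl⟩
    · have h1 : c (u.1+1, u.2) = s ∧ c (u.1, u.2+1) = s := by tauto
      have h2 : c (u.1-1, u.2) = s ∧ c (u.1-1, u.2+1) = s := by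
        rcases hv2 with h'|h'|h' <;> simp_all <;> tauto
      exact ⟨(u.1, u.2+1), (hmem u).2.2, (u.1-1, u.2+1), by simp [triCells] <;> omega,
        h1.2, h2.2, connA_symm (.single ⟨by simp [adjA, dirsA] <;> omega, h1.2⟩) h2.2⟩
  -- v = u + (0,1) : shared cell (u.1, u.2+1) = v
  · by_cases hg : c (u.1, u.2+1) = s
    · exact ⟨(u.1, u.2+1), (hmem u).2.2, (u.1, u.2+1), (hmem _).1, hg, hg, .refl⟩
    · have h1 : c u = s ∧ c (u.1+1, u.2) = s := by tauto
      have h2 : c (u.1+1, u.2+1) = s ∧ c (u.1, (u.2+1)+1) = s := by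
        rcases hv2 with h'|h'|h' <;> simp_all
      exact ⟨(u.1+1, u.2), (hmem u).2.1, (u.1+1, u.2+1), (hmem _).2.1, h1.2, h2.1,
        .single ⟨by simp [adjA, dirsA] <;> omega, h2.1⟩⟩
  -- v = u - (0,1) : shared cell u = (v.1, v.2+1)
  · by_cases hg : c u = s
    · exact ⟨u, (hmem u).1, u, by simp [triCells] <;> omega, hg, hg, .refl⟩
    · have h1 : c (u.1+1, u.2) = s ∧ c (u.1, u.2+1) = s := by tauto
      have h2 : c (u.1, u.2-1) = s ∧ c (u.1+1, u.2-1) = s := by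
        rcases hv2 with h'|h'|h' <;> simp_all <;> tauto
      exact ⟨(u.1+1, u.2), (hmem u).2.1, (u.1+1, u.2-1), by simp [triCells] <;> omega,
        h1.1, h2.2, connA_symm (.single ⟨by simp [adjA, dirsA] <;> omega, h1.1⟩) h2.2⟩
  -- v = u + (1,-1) : shared cell (u.1+1, u.2) = (v.1, v.2+1)
  · by_cases hg : c (u.1+1, u.2) = s
    · exact ⟨(u.1+1, u.2), (hmem u).2.1, (u.1+1, u.2), by simp [triCells] <;> omega,
        hg, hg, .refl⟩
    · have h1 : c u = s ∧ c (u.1, u.2+1) = s := by tauto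
      have h2 : c (u.1+1, u.2-1) = s ∧ c ((u.1+1)+1, u.2-1) = s := by
        rcases hv2 with h'|h'|h' <;> simp_all <;> tauto
      exact ⟨u, (hmem u).1, (u.1+1, u.2-1), by simp [triCells] <;> omega,
        h1.1, h2.1, .single ⟨by simp [adjA, dirsA] <;> omega, h2.1⟩⟩
  -- v = u + (-1,1) : shared cell (u.1, u.2+1) = (v.1+1, v.2)
  · by_cases hg : c (u.1, u.2+1) = s
    · exact ⟨(u.1, u.2+1), (hmem u).2.2, (u.1, u.2+1), by simp [triCells] <;> omega,
        hg, hg, .refl⟩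
    · have h1 : c u = s ∧ c (u.1+1, u.2) = s := by tauto
      have h2 : c (u.1-1, u.2+1) = s ∧ c (u.1-1, (u.2+1)+1) = s := by
        rcases hv2 with h'|h'|h' <;> simp_all <;> tauto
      exact ⟨u, (hmem u).1, (u.1-1, u.2+1), by simp [triCells] <;> omega,
        h1.1, h2.1, connA_symm (.single ⟨by simp [adjA, dirsA] <;> omega, h1.1⟩) h2.1⟩

lemma lift_conn {c : ℤ × ℤ → Bool} {s : Bool} {u v : ℤ × ℤ}
    (h : connA (redc c) s u v) (hu : redc c u = s)
    {a : ℤ × ℤ} (ha : a ∈ triCells u) (hca : c a = s) :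
    ∀ b ∈ triCells v, c b = s → connA c s a b := by
  have main : redc c v = s ∧ ∀ b ∈ triCells v, c b = s → connA c s a b := by
    induction h with
    | refl => exact ⟨hu, fun b hb hcb => cliqueA ha hb hca hcb⟩
    | tail hab hbc ih =>
      obtain ⟨hw, ihc⟩ := ih
      obtain ⟨hadj, hcol⟩ := hbc
      refine ⟨hcol, fun b hb hcb => ?_⟩
      obtain ⟨a₀, ha₀, b₀, hb₀, hca₀, hcb₀, hconn⟩ := bridge hadj hw hcol
      exact ((ihc a₀ ha₀ hca₀).trans hconn).trans (cliqueA hb₀ hb hcb₀ hcb)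
  exact main.2



/-! ### the Y theorem -/

def SideA (n : ℕ) (z : ℤ × ℤ) : Prop := z.1 = 0 ∧ 0 ≤ z.2 ∧ z.2 ≤ (n:ℤ) - 1
def SideB (n : ℕ) (z : ℤ × ℤ) : Prop := z.2 = 0 ∧ 0 ≤ z.1 ∧ z.1 ≤ (n:ℤ) - 1
def SideC (n : ℕ) (z : ℤ × ℤ) : Prop := 0 ≤ z.1 ∧ 0 ≤ z.2 ∧ z.1 + z.2 = (n:ℤ) - 1

lemma liftSideA {c : ℤ × ℤ → Bool} {s : Bool} {n : ℕ} {z : ℤ × ℤ}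
    (hz : SideA n z) (hc : redc c z = s) :
    ∃ a ∈ triCells z, SideA (n+1) a ∧ c a = s := by
  obtain ⟨h1, h2, h3⟩ := hz
  rcases redc_two hc with h | h | h
  · exact ⟨z, by simp [triCells], ⟨h1, h2, by push_cast; omega⟩, h.1⟩
  · exact ⟨z, by simp [triCells], ⟨h1, h2, by push_cast; omega⟩, h.1⟩
  · exact ⟨(z.1, z.2+1), by simp [triCells],
      ⟨h1, by show 0 ≤ z.2+1; omega, by show z.2+1 ≤ ((n+1:ℕ):ℤ)-1; push_cast; omega⟩, h.2⟩

lemma liftSideB {c : ℤ × ℤ → Bool} {s : Bool} {n : ℕ} {z : ℤ × ℤ}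
    (hz : SideB n z) (hc : redc c z = s) :
    ∃ a ∈ triCells z, SideB (n+1) a ∧ c a = s := by
  obtain ⟨h1, h2, h3⟩ := hz
  rcases redc_two hc with h | h | h
  · exact ⟨z, by simp [triCells], ⟨h1, h2, by push_cast; omega⟩, h.1⟩
  · exact ⟨z, by simp [triCells], ⟨h1, h2, by push_cast; omega⟩, h.1⟩
  · exact ⟨(z.1+1, z.2), by simp [triCells],
      ⟨h1, by show 0 ≤ z.1+1; omega, by show z.1+1 ≤ ((n+1:ℕ):ℤ)-1; push_cast; omega⟩, h.1⟩

lemma liftSideC {c : ℤ × ℤ → Bool} {s : Bool} {n : ℕ} {z : ℤ × ℤ}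
    (hz : SideC n z) (hc : redc c z = s) :
    ∃ a ∈ triCells z, SideC (n+1) a ∧ c a = s := by
  obtain ⟨h1, h2, h3⟩ := hz
  rcases redc_two hc with h | h | h
  · exact ⟨(z.1+1, z.2), by simp [triCells],
      ⟨by show 0 ≤ z.1+1; omega, h2,
        by show z.1+1+z.2 = ((n+1:ℕ):ℤ)-1; push_cast; omega⟩, h.2⟩
  · exact ⟨(z.1, z.2+1), by simp [triCells],
      ⟨h1, by show 0 ≤ z.2+1; omega,
        by show z.1+(z.2+1) = ((n+1:ℕ):ℤ)-1; push_cast; omega⟩, h.2⟩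
  · exact ⟨(z.1+1, z.2), by simp [triCells],
      ⟨by show 0 ≤ z.1+1; omega, h2,
        by show z.1+1+z.2 = ((n+1:ℕ):ℤ)-1; push_cast; omega⟩, h.1⟩

theorem Ywin : ∀ (n : ℕ), 1 ≤ n → ∀ (c : ℤ × ℤ → Bool),
    ∃ s z₁ z₂ z₃, SideA n z₁ ∧ SideB n z₂ ∧ SideC n z₃ ∧
      c z₁ = s ∧ c z₂ = s ∧ c z₃ = s ∧ connA c s z₁ z₂ ∧ connA c s z₁ z₃ := by
  intro n
  induction n with
  | zero => omega
  | succ n ih =>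
    intro _ c
    by_cases hn1 : 1 ≤ n
    · obtain ⟨s, z₁, z₂, z₃, hA, hB, hC, h1, h2, h3, c12, c13⟩ := ih hn1 (redc c)
      obtain ⟨a₁, ha₁m, ha₁s, ha₁c⟩ := liftSideA hA h1
      obtain ⟨a₂, ha₂m, ha₂s, ha₂c⟩ := liftSideB hB h2
      obtain ⟨a₃, ha₃m, ha₃s, ha₃c⟩ := liftSideC hC h3
      exact ⟨s, a₁, a₂, a₃, ha₁s, ha₂s, ha₃s, ha₁c, ha₂c, ha₃c,
        lift_conn c12 h1 ha₁m ha₁c a₂ ha₂m ha₂c,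
        lift_conn c13 h1 ha₁m ha₁c a₃ ha₃m ha₃c⟩
    · have hn0 : n = 0 := by omega
      subst hn0
      exact ⟨c (0,0), (0,0), (0,0), (0,0), ⟨rfl, by norm_num⟩, ⟨rfl, by norm_num⟩,
        ⟨le_refl 0, le_refl 0, by norm_num⟩, rfl, rfl, rfl, .refl, .refl⟩

/-! ### extraction of a long same-colored connection from the left side -/

lemma extract (m : ℕ) (hm : 1 ≤ m) (c : ℤ × ℤ → Bool) :
    ∃ (q : ℤ) (z' y : ℤ × ℤ), 0 ≤ q ∧ q ≤ 8*m ∧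
      adjA (0, q) z' ∧ c z' = c (0, q) ∧
      connA c (c (0, q)) (0, q) y ∧
      2*m ≤ (y.1.natAbs + (y.2 - q).natAbs) := by
  obtain ⟨s, z₁, z₂, z₃, hA, hB, hC, h1, h2, h3, c12, c13⟩ := Ywin (8*m+1) (by omega) c
  obtain ⟨hA1, hA2, hA3⟩ := hA
  obtain ⟨hB1, hB2, hB3⟩ := hB
  obtain ⟨hC1, hC2, hC3⟩ := hC
  push_cast at hA3 hB3 hC3
  have hz₁ : (0, z₁.2) = z₁ := by rw [Prod.ext_iff]; exact ⟨hA1.symm, rfl⟩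
  have key : ∀ z, connA c s z₁ z →
      (2*m ≤ ((z.1 - z₁.1).natAbs + (z.2 - z₁.2).natAbs)) →
      ∃ (z' y : ℤ × ℤ), adjA (0, z₁.2) z' ∧ c z' = c (0, z₁.2) ∧
        connA c (c (0, z₁.2)) (0, z₁.2) y ∧
        2*m ≤ (y.1.natAbs + (y.2 - z₁.2).natAbs) := by
    intro z hconn hdist
    rw [hz₁]
    have hne : z₁ ≠ z := by
      intro he; rw [← he] at hdist; simp at hdist; omega
    rcases Relation.ReflTransGen.cases_head hconn with he | ⟨z', hstep, _⟩
    · exact absurd he hne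
    · refine ⟨z', z, hstep.1, by rw [hstep.2, h1], by rw [h1]; exact hconn, by omega⟩
  have hfar : (2*m ≤ ((z₂.1 - z₁.1).natAbs + (z₂.2 - z₁.2).natAbs)) ∨
      (2*m ≤ ((z₃.1 - z₁.1).natAbs + (z₃.2 - z₁.2).natAbs)) := by omega
  rcases hfar with h | h
  · obtain ⟨z', y, k1, k2, k3, k4⟩ := key z₂ c12 h
    exact ⟨z₁.2, z', y, hA2, by omega, k1, k2, k3, k4⟩
  · obtain ⟨z', y, k1, k2, k3, k4⟩ := key z₃ c13 h
    exact ⟨z₁.2, z', y, hA2, by omega, k1, k2, k3, k4⟩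



lemma maj_formula (σ : Config) (z : Site) : maj σ z =
    decide (2 ≤ ((if σ (z.1-1, z.2) then 1 else 0) +
      ((if σ (z.1+1, z.2) then 1 else 0) +
       ((if σ (if Even (z.1 + z.2) then (z.1, z.2 + 1) else (z.1, z.2 - 1)) then 1 else 0) + 0)) : ℕ)) := by
  simp only [maj, nbrs, List.countP_cons, List.countP_nil]
  congr 1
  rcases σ (z.1-1,z.2) <;> rcases σ (z.1+1,z.2) <;>
    rcases σ (if Even (z.1 + z.2) then (z.1, z.2 + 1) else (z.1, z.2 - 1)) <;> simp <;> omega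

/-! ### the ℓ∞ norm, levels, spheres -/

def Nrm (d : Site) : ℕ := max d.1.natAbs d.2.natAbs

lemma adj_cases {u v : Site} (h : Adj u v) :
    v = (u.1-1, u.2) ∨ v = (u.1+1, u.2) ∨ v = (u.1, u.2+1) ∨ v = (u.1, u.2-1) := by
  rcases mem_nbrs.mp h with h | h | h
  · exact Or.inl h
  · exact Or.inr (Or.inl h)
  · by_cases hp : Even (u.1 + u.2)
    · rw [if_pos hp] at h; exact Or.inr (Or.inr (Or.inl h))
    · rw [if_neg hp] at h; exact Or.inr (Or.inr (Or.inr h))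

lemma Nrm_step {x u v : Site} (h : Adj u v) :
    Nrm (v.1 - x.1, v.2 - x.2) ≤ Nrm (u.1 - x.1, u.2 - x.2) + 1 := by
  rcases adj_cases h with rfl | rfl | rfl | rfl <;> simp [Nrm] <;> omega

lemma cluster_mono_level {w : Config} {x y : Site} (hy : y ∈ cluster w x) (k : ℕ)
    (hk : k ≤ Nrm (y.1 - x.1, y.2 - x.2)) :
    ∃ z ∈ cluster w x, Nrm (z.1 - x.1, z.2 - x.2) = k := by
  have hy' : Relation.ReflTransGen (fun a b => Adj a b ∧ w b = w x) x y := hy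
  clear hy
  induction hy' with
  | refl =>
    refine ⟨x, Relation.ReflTransGen.refl, ?_⟩
    simp [Nrm] at hk ⊢
    omega
  | tail hab hbc ih =>
    rename_i b v
    by_cases hb : k ≤ Nrm (b.1 - x.1, b.2 - x.2)
    · exact ih hb
    · have hstep := Nrm_step (x := x) hbc.1
      have : Nrm (v.1 - x.1, v.2 - x.2) = k := by omega
      exact ⟨v, hab.tail hbc, this⟩

noncomputable def sphere (x : Site) (k : ℕ) : Finset Site :=
  (Finset.Icc (x.1 - k, x.2 - k) (x.1 + k, x.2 + k)).filter
    (fun y => Nrm (y.1 - x.1, y.2 - x.2) = k)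

lemma mem_sphere {x : Site} {k : ℕ} {y : Site} :
    y ∈ sphere x k ↔ Nrm (y.1 - x.1, y.2 - x.2) = k := by
  unfold sphere; rw [Finset.mem_filter]
  simp only [sphere, Finset.mem_filter, Finset.mem_Icc, Prod.le_def, Nrm]
  omega

/-! ### measurability -/

lemma meas_evolve (n : ℕ) (z : Site) : Measurable fun σ0 : Config => evolve σ0 n z := by
  induction n generalizing z with
  | zero => exact measurable_pi_apply z
  | succ n ih =>
    have hrw : (fun σ0 : Config => evolve σ0 (n+1) z) =
        fun σ0 => if (Even n ∧ ¬ Even (z.1 + z.2)) ∨ (¬ Even n ∧ Even (z.1 + z.2))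
          then maj (evolve σ0 n) z else evolve σ0 n z := rfl
    rw [hrw]
    by_cases hC : (Even n ∧ ¬ Even (z.1 + z.2)) ∨ (¬ Even n ∧ Even (z.1 + z.2))
    · simp only [if_pos hC]
      have heq : (fun σ0 : Config => maj (evolve σ0 n) z) =
          (fun t : Bool × Bool × Bool =>
            decide (2 ≤ ((if t.1 then 1 else 0) +
              ((if t.2.1 then 1 else 0) + ((if t.2.2 then 1 else 0) + 0)) : ℕ))) ∘
          (fun σ0 => (evolve σ0 n (z.1-1, z.2), evolve σ0 n (z.1+1, z.2),
            evolve σ0 n (if Even (z.1 + z.2) then (z.1, z.2 + 1) else (z.1, z.2 - 1)))) := by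
        funext σ0
        rw [maj_formula]
        rfl
      rw [heq]
      exact (measurable_of_countable _).comp ((ih _).prodMk ((ih _).prodMk (ih _)))
    · simp only [if_neg hC]
      exact ih z

lemma meas_eq_vals (n : ℕ) (b a : Site) :
    MeasurableSet {σ0 : Config | evolve σ0 n b = evolve σ0 n a} := by
  have h : {σ0 : Config | evolve σ0 n b = evolve σ0 n a} =
      (fun σ0 => (evolve σ0 n b, evolve σ0 n a)) ⁻¹' {p : Bool × Bool | p.1 = p.2} := rfl
  rw [h]
  exact ((meas_evolve n b).prodMk (meas_evolve n a)) (Set.Finite.measurableSet (Set.toFinite _))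

lemma chain_and_iff {R : Site → Site → Prop} {Q : Site → Prop} :
    ∀ (l : List Site) (h : Site),
      List.Chain (fun a b => R a b ∧ Q b) h l ↔ (List.Chain R h l ∧ ∀ b ∈ l, Q b) := by
  intro l
  induction l with
  | nil => simp [List.Chain]
  | cons b t ihl =>
    intro h
    simp only [List.Chain, List.isChain_cons_cons] at ihl ⊢
    simp only [ihl, List.mem_cons]
    constructor
    · rintro ⟨⟨h1, h2⟩, h3, h4⟩
      exact ⟨⟨h1, h3⟩, fun c hc => by rcases hc with rfl | hc; exacts [h2, h4 c hc]⟩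
    · rintro ⟨⟨h1, h3⟩, h4⟩
      exact ⟨⟨h1, h4 b (Or.inl rfl)⟩, h3, fun c hc => h4 c (Or.inr hc)⟩

lemma meas_forall_vals (n : ℕ) (a : Site) (l : List Site) :
    MeasurableSet {σ0 : Config | ∀ b ∈ l, evolve σ0 n b = evolve σ0 n a} := by
  induction l with
  | nil => simp
  | cons b t ihl =>
    have h : {σ0 : Config | ∀ c ∈ b :: t, evolve σ0 n c = evolve σ0 n a} =
        {σ0 : Config | evolve σ0 n b = evolve σ0 n a} ∩
          {σ0 : Config | ∀ c ∈ t, evolve σ0 n c = evolve σ0 n a} := by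
      ext σ0; simp [List.forall_mem_cons]
    rw [h]
    exact (meas_eq_vals n b a).inter ihl

lemma meas_reach (R : Site → Site → Prop) (n : ℕ) (a t : Site) :
    MeasurableSet {σ0 : Config | Relation.ReflTransGen
      (fun u v => R u v ∧ evolve σ0 n v = evolve σ0 n a) a t} := by
  classical
  have hset : {σ0 : Config | Relation.ReflTransGen
      (fun u v => R u v ∧ evolve σ0 n v = evolve σ0 n a) a t} =
      ⋃ (l : List Site),
        ((if List.Chain R a l ∧ (a :: l).getLast (by simp) = t then (Set.univ : Set Config)
          else ∅) ∩ {σ0 : Config | ∀ b ∈ l, evolve σ0 n b = evolve σ0 n a}) := by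
    ext σ0
    simp only [Set.mem_setOf_eq, Set.mem_iUnion, Set.mem_inter_iff]
    constructor
    · intro h
      obtain ⟨l, hc, hl⟩ := List.exists_isChain_cons_of_relationReflTransGen h
      replace hc := (chain_and_iff l a).mp hc
      exact ⟨l, by rw [if_pos ⟨hc.1, hl⟩]; trivial, hc.2⟩
    · rintro ⟨l, h1, h2⟩
      by_cases hp : List.Chain R a l ∧ (a :: l).getLast (by simp) = t
      · exact List.relationReflTransGen_of_exists_isChain_cons l
          ((chain_and_iff l a).mpr ⟨hp.1, h2⟩) hp.2
      · rw [if_neg hp] at h1; exact absurd h1 (by simp)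
  rw [hset]
  refine MeasurableSet.iUnion fun l => MeasurableSet.inter ?_ (meas_forall_vals n a l)
  split
  · exact MeasurableSet.univ
  · exact MeasurableSet.empty

lemma meas_cluster_mem (n : ℕ) (x y : Site) :
    MeasurableSet {σ0 : Config | y ∈ cluster (evolve σ0 n) x} :=
  meas_reach Adj n x y



/-! ### translations and measure invariance -/

def trs (d : Site) (z : Site) : Site := (z.1 + d.1, z.2 + d.2)

@[simp] lemma trs_fst (d z : Site) : (trs d z).1 = z.1 + d.1 := rfl
@[simp] lemma trs_snd (d z : Site) : (trs d z).2 = z.2 + d.2 := rfl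

lemma trs_inj (d : Site) : Function.Injective (trs d) := by
  intro a b h
  rw [Prod.ext_iff] at h ⊢
  simp only [trs_fst, trs_snd] at h
  omega

def shiftC (d : Site) (σ : Config) : Config := fun z => σ (trs d z)

lemma meas_shift (d : Site) : Measurable (shiftC d) :=
  measurable_pi_lambda _ (fun z => measurable_pi_apply _)

lemma nbrs_trs {d : Site} (hd : Even (d.1 + d.2)) (z : Site) :
    nbrs (trs d z) = (nbrs z).map (trs d) := by
  have hpar : Even ((trs d z).1 + (trs d z).2) ↔ Even (z.1 + z.2) := by
    simp only [trs_fst, trs_snd, Int.even_iff] at hd ⊢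
    omega
  by_cases hp : Even (z.1 + z.2)
  · unfold nbrs
    rw [if_pos hp, if_pos (hpar.mpr hp)]
    simp [trs, Prod.ext_iff]
    omega
  · unfold nbrs
    rw [if_neg hp, if_neg (fun hc => hp (hpar.mp hc))]
    simp [trs, Prod.ext_iff]
    omega

lemma maj_trs {d : Site} (hd : Even (d.1 + d.2)) (σ : Config) (z : Site) :
    maj σ (trs d z) = maj (shiftC d σ) z := by
  unfold maj
  rw [nbrs_trs hd, List.countP_map]
  rfl

lemma evolve_trs {d : Site} (hd : Even (d.1 + d.2)) (σ0 : Config) (n : ℕ) (z : Site) :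
    evolve (shiftC d σ0) n z = evolve σ0 n (trs d z) := by
  induction n generalizing z with
  | zero => rfl
  | succ n ih =>
    have hps : evolve (shiftC d σ0) n = shiftC d (evolve σ0 n) := funext fun y => ih y
    show syncStep n (evolve (shiftC d σ0) n) z = syncStep n (evolve σ0 n) (trs d z)
    unfold syncStep
    have hpar : Even ((trs d z).1 + (trs d z).2) ↔ Even (z.1 + z.2) := by
      simp only [trs_fst, trs_snd, Int.even_iff] at hd ⊢
      omega
    by_cases hC : (Even n ∧ ¬ Even (z.1 + z.2)) ∨ (¬ Even n ∧ Even (z.1 + z.2))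
    · rw [if_pos hC, if_pos (by tauto)]
      rw [hps, ← maj_trs hd]
    · rw [if_neg hC, if_neg (by tauto)]
      exact ih z

/-! cylinders -/

def cyl (s : Finset Site) (f : Site → Bool) : Set Config := {σ | ∀ x ∈ s, σ x = f x}

def cylSets : Set (Set Config) := {S | ∃ s f, S = cyl s f}

lemma cyl_measurable {S : Set Config} (h : S ∈ cylSets) : MeasurableSet S := by
  obtain ⟨s, f, rfl⟩ := h
  have : cyl s f = ⋂ x ∈ s, (fun σ : Config => σ x) ⁻¹' {f x} := by
    ext σ; simp [cyl]
  rw [this]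
  exact Finset.measurableSet_biInter s fun x _ => (measurable_pi_apply x) (by trivial)

lemma generate_cyl :
    (inferInstance : MeasurableSpace Config) = MeasurableSpace.generateFrom cylSets := by
  refine le_antisymm ?_ (MeasurableSpace.generateFrom_le fun t ht => cyl_measurable ht)
  have hev : ∀ z : Site, @Measurable Config Bool (MeasurableSpace.generateFrom cylSets) _
      (fun σ => σ z) := by
    intro z
    refine @measurable_to_countable' Bool Config _ _ (MeasurableSpace.generateFrom cylSets)
      (fun σ => σ z) ?_
    intro b
    have : (fun σ : Config => σ z) ⁻¹' {b} = cyl {z} (fun _ => b) := by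
      ext σ; simp [cyl]
    rw [this]
    exact MeasurableSpace.measurableSet_generateFrom ⟨{z}, fun _ => b, rfl⟩
  refine iSup_le fun z => ?_
  rw [MeasurableSpace.comap_le_iff_le_map]
  exact measurable_iff_le_map.mp (hev z)

lemma isPiSystem_cyl : IsPiSystem cylSets := by
  rintro S ⟨s, f, rfl⟩ T ⟨t, g, rfl⟩ hne
  obtain ⟨σ₀, hσs, hσt⟩ := hne
  refine ⟨s ∪ t, fun z => if z ∈ s then f z else g z, ?_⟩
  ext σ
  simp only [cyl, Set.mem_inter_iff, Set.mem_setOf_eq, Finset.mem_union]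
  constructor
  · rintro ⟨h1, h2⟩ z hz
    by_cases hzs : z ∈ s
    · rw [if_pos hzs]; exact h1 z hzs
    · rw [if_neg hzs]; exact h2 z (by tauto)
  · intro h
    constructor
    · intro z hz
      have := h z (Or.inl hz)
      rwa [if_pos hz] at this
    · intro z hz
      have := h z (Or.inr hz)
      by_cases hzs : z ∈ s
      · rw [if_pos hzs] at this
        rw [this]
        have e1 : σ₀ z = f z := hσs z hzs
        have e2 : σ₀ z = g z := hσt z hz
        rw [← e1, e2]
      · rwa [if_neg hzs] at this

lemma map_shift_eq {P : Measure Config} (hP : IsBernoulliProduct (1/2) P) (d : Site) :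
    P.map (shiftC d) = P := by
  have hprob : IsProbabilityMeasure P := hP.1
  haveI : IsProbabilityMeasure (P.map (shiftC d)) :=
    Measure.isProbabilityMeasure_map (meas_shift d).aemeasurable
  refine MeasureTheory.ext_of_generate_finite cylSets generate_cyl isPiSystem_cyl ?_ ?_
  · rintro S ⟨s, f, rfl⟩
    rw [Measure.map_apply (meas_shift d) (cyl_measurable ⟨s, f, rfl⟩)]
    have hpre : (shiftC d) ⁻¹' (cyl s f) =
        cyl (s.image (trs d)) (fun z => f (z.1 - d.1, z.2 - d.2)) := by
      ext σ
      simp only [cyl, Set.mem_preimage, Set.mem_setOf_eq, Finset.mem_image, shiftC]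
      constructor
      · rintro h z ⟨x, hx, rfl⟩
        have : ((trs d x).1 - d.1, (trs d x).2 - d.2) = x := by
          rw [Prod.ext_iff]; simp
        rw [this]
        exact h x hx
      · intro h x hx
        have := h (trs d x) ⟨x, hx, rfl⟩
        have harg : ((trs d x).1 - d.1, (trs d x).2 - d.2) = x := by
          rw [Prod.ext_iff]; simp
        rwa [harg] at this
    rw [hpre]
    have h1 := hP.2 (s.image (trs d)) (fun z => f (z.1 - d.1, z.2 - d.2))
    have h2 := hP.2 s f
    rw [show cyl (s.image (trs d)) (fun z => f (z.1 - d.1, z.2 - d.2)) =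
      {σ : Config | ∀ x ∈ s.image (trs d), σ x = f (x.1 - d.1, x.2 - d.2)} from rfl, h1]
    rw [show cyl s f = {σ : Config | ∀ x ∈ s, σ x = f x} from rfl, h2]
    rw [Finset.prod_image (fun a _ b _ h => trs_inj d h)]
    refine Finset.prod_congr rfl fun x _ => ?_
    have harg : ((trs d x).1 - d.1, (trs d x).2 - d.2) = x := by
      rw [Prod.ext_iff]; simp
    rw [harg]
  · rw [Measure.map_apply (meas_shift d) MeasurableSet.univ]
    simp

lemma shift_invariant {P : Measure Config} (hP : IsBernoulliProduct (1/2) P) (d : Site)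
    {E : Set Config} (hE : MeasurableSet E) : P ((shiftC d) ⁻¹' E) = P E := by
  conv_rhs => rw [← map_shift_eq hP d]
  rw [Measure.map_apply (meas_shift d) hE]



/-! ### the crossing events -/

def D6F : Finset Site := {(2,0),(-2,0),(1,1),(-1,-1),(1,-1),(-1,1)}

def Ehat (n m : ℕ) (b e : Site) : Set Config :=
  {σ0 | evolve σ0 n (trs e b) = evolve σ0 n b ∧
    ∃ y, m ≤ Nrm (y.1 - b.1, y.2 - b.2) ∧
      Relation.ReflTransGen (fun u v => triAdj u v ∧ evolve σ0 n v = evolve σ0 n b) b y}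

lemma meas_Ehat (n m : ℕ) (b e : Site) : MeasurableSet (Ehat n m b e) := by
  have h : Ehat n m b e = {σ0 : Config | evolve σ0 n (trs e b) = evolve σ0 n b} ∩
      ⋃ (y : Site), ((if m ≤ Nrm (y.1 - b.1, y.2 - b.2) then (Set.univ : Set Config) else ∅) ∩
        {σ0 : Config | Relation.ReflTransGen
          (fun u v => triAdj u v ∧ evolve σ0 n v = evolve σ0 n b) b y}) := by
    ext σ0
    simp only [Ehat, Set.mem_setOf_eq, Set.mem_inter_iff, Set.mem_iUnion]
    constructor
    · rintro ⟨h1, y, hy1, hy2⟩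
      exact ⟨h1, y, by rw [if_pos hy1]; trivial, hy2⟩
    · rintro ⟨h1, y, hy1, hy2⟩
      by_cases hp : m ≤ Nrm (y.1 - b.1, y.2 - b.2)
      · exact ⟨h1, y, hp, hy2⟩
      · rw [if_neg hp] at hy1; exact absurd hy1 (by simp)
  rw [h]
  refine (meas_eq_vals n (trs e b) b).inter (MeasurableSet.iUnion fun y => ?_)
  refine MeasurableSet.inter ?_ (meas_reach triAdj n b y)
  split
  · exact MeasurableSet.univ
  · exact MeasurableSet.empty

lemma trs_swap (d e b : Site) : trs d (trs e b) = trs e (trs d b) := by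
  simp [trs, Prod.ext_iff]; constructor <;> ring

lemma triAdj_trs (d : Site) {u v : Site} (h : triAdj u v) : triAdj (trs d u) (trs d v) := by
  have hd : ((trs d v).1 - (trs d u).1, (trs d v).2 - (trs d u).2) =
      (v.1 - u.1, v.2 - u.2) := by
    simp [trs, Prod.ext_iff] <;> constructor <;> ring
  unfold triAdj
  rw [hd]
  exact h

lemma Nrm_trs (d y b : Site) :
    Nrm ((trs d y).1 - (trs d b).1, (trs d y).2 - (trs d b).2) = Nrm (y.1 - b.1, y.2 - b.2) := by
  have h1 : (trs d y).1 - (trs d b).1 = y.1 - b.1 := by simp only [trs_fst]; ring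
  have h2 : (trs d y).2 - (trs d b).2 = y.2 - b.2 := by simp only [trs_snd]; ring
  rw [h1, h2]

lemma trs_neg_cancel (d z : Site) : trs d (trs (-d.1, -d.2) z) = z := by
  simp [trs, Prod.ext_iff]

lemma trs_neg_cancel' (d z : Site) : trs (-d.1, -d.2) (trs d z) = z := by
  simp [trs, Prod.ext_iff]

lemma Ehat_shift (n m : ℕ) (b δ : Site) (hδ : Even (δ.1 + δ.2)) (e : Site) :
    Ehat n m (trs δ b) e = shiftC δ ⁻¹' Ehat n m b e := by
  ext σ0
  have hw : ∀ z, evolve (shiftC δ σ0) n z = evolve σ0 n (trs δ z) :=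
    fun z => evolve_trs hδ σ0 n z
  simp only [Ehat, Set.mem_preimage, Set.mem_setOf_eq]
  constructor
  · rintro ⟨h1, y, hy1, hy2⟩
    refine ⟨?_, trs (-δ.1, -δ.2) y, ?_, ?_⟩
    · rw [hw, hw, trs_swap δ e b]
      exact h1
    · rw [← trs_neg_cancel' δ b, Nrm_trs]
      exact hy1
    · have hlift := Relation.ReflTransGen.lift (r := fun u v => triAdj u v ∧
          evolve σ0 n v = evolve σ0 n (trs δ b))
        (p := fun u v => triAdj u v ∧
          evolve (shiftC δ σ0) n v = evolve (shiftC δ σ0) n b)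
        (trs (-δ.1, -δ.2)) ?_ _ _ hy2
      · rwa [Function.onFun, trs_neg_cancel' δ b] at hlift
      · rintro u v ⟨ha, hv⟩
        refine ⟨triAdj_trs _ ha, ?_⟩
        rw [hw, hw, trs_neg_cancel δ v]
        exact hv
  · rintro ⟨h1, y, hy1, hy2⟩
    rw [hw, hw, trs_swap δ e b] at h1
    refine ⟨h1, trs δ y, ?_, ?_⟩
    · rw [Nrm_trs]
      exact hy1
    · refine Relation.ReflTransGen.lift (r := fun u v => triAdj u v ∧
          evolve (shiftC δ σ0) n v = evolve (shiftC δ σ0) n b)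
        (p := fun u v => triAdj u v ∧
          evolve σ0 n v = evolve σ0 n (trs δ b))
        (trs δ) ?_ _ _ hy2
      rintro u v ⟨ha, hv⟩
      refine ⟨triAdj_trs _ ha, ?_⟩
      rw [hw, hw] at hv
      exact hv

/-! ### covering by crossing events (the Y theorem applied on the lattice) -/

lemma phi_diff (b₀ : Site) (u v : ℤ × ℤ) :
    ((b₀.1 + 2*v.1 + v.2, b₀.2 + v.2) : Site).1 - ((b₀.1 + 2*u.1 + u.2, b₀.2 + u.2) : Site).1
      = 2*(v.1-u.1) + (v.2-u.2) ∧
    ((b₀.1 + 2*v.1 + v.2, b₀.2 + v.2) : Site).2 - ((b₀.1 + 2*u.1 + u.2, b₀.2 + u.2) : Site).2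
      = v.2 - u.2 := by
  constructor <;> simp <;> ring

lemma phi_triAdj (b₀ : Site) {u v : ℤ × ℤ} (h : adjA u v) :
    triAdj (b₀.1 + 2*u.1 + u.2, b₀.2 + u.2) (b₀.1 + 2*v.1 + v.2, b₀.2 + v.2) := by
  unfold triAdj
  obtain ⟨h1, h2⟩ := phi_diff b₀ u v
  rw [show ((b₀.1 + 2*v.1 + v.2, b₀.2 + v.2) : Site).1 - (b₀.1 + 2*u.1 + u.2, b₀.2 + u.2).1 =
    2*(v.1-u.1) + (v.2-u.2) from h1,
    show ((b₀.1 + 2*v.1 + v.2, b₀.2 + v.2) : Site).2 - (b₀.1 + 2*u.1 + u.2, b₀.2 + u.2).2 =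
    v.2 - u.2 from h2]
  rcases adjA_cases h with rfl|rfl|rfl|rfl|rfl|rfl <;> simp [D6] <;> omega

lemma covering (n m : ℕ) (hm : 1 ≤ m) (b₀ : Site) (σ0 : Config) :
    ∃ k ∈ Finset.range (8*m+1), ∃ e ∈ D6F,
      σ0 ∈ Ehat n m (trs ((k:ℤ), (k:ℤ)) b₀) e := by
  obtain ⟨q, z', y, hq0, hq8, hadj, hcz, hconn, hdist⟩ :=
    extract m hm (fun z => evolve σ0 n (b₀.1 + 2*z.1 + z.2, b₀.2 + z.2))
  have hp : trs ((q.toNat : ℤ), (q.toNat : ℤ)) b₀ =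
      (b₀.1 + 2*(0:ℤ) + q, b₀.2 + q) := by
    simp [trs, Prod.ext_iff]
    omega
  set p : Site := (b₀.1 + 2*(0:ℤ) + q, b₀.2 + q) with hpdef
  set e : Site := ((b₀.1 + 2*z'.1 + z'.2) - p.1, (b₀.2 + z'.2) - p.2) with hedef
  have hetrs : trs e p = (b₀.1 + 2*z'.1 + z'.2, b₀.2 + z'.2) := by
    simp [trs, hedef, Prod.ext_iff]
  have heD6 : e ∈ D6F := by
    have := phi_triAdj b₀ hadj (u := ((0:ℤ), q)) (v := z')
    unfold triAdj at this
    rw [hedef]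
    simp only [D6, List.mem_cons, List.not_mem_nil, or_false] at this
    simp only [D6F, Finset.mem_insert, Finset.mem_singleton]
    exact_mod_cast this
  refine ⟨q.toNat, ?_, e, heD6, ?_⟩
  · simp only [Finset.mem_range]
    omega
  · rw [hp]
    refine ⟨?_, (b₀.1 + 2*y.1 + y.2, b₀.2 + y.2), ?_, ?_⟩
    · rw [hetrs]
      exact hcz
    · have h1 : (b₀.1 + 2*y.1 + y.2) - p.1 = 2*y.1 + (y.2 - q) := by
        rw [hpdef]; simp; ring
      have h2 : (b₀.2 + y.2) - p.2 = y.2 - q := by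
        rw [hpdef]; simp
      rw [show ((b₀.1 + 2*y.1 + y.2, b₀.2 + y.2) : Site).1 - p.1 = 2*y.1 + (y.2 - q) from h1,
        show ((b₀.1 + 2*y.1 + y.2, b₀.2 + y.2) : Site).2 - p.2 = y.2 - q from h2]
      simp only [Nrm]
      omega
    · refine Relation.ReflTransGen.lift
        (r := fun u v : ℤ × ℤ => adjA u v ∧
          (evolve σ0 n (b₀.1 + 2*v.1 + v.2, b₀.2 + v.2) =
           evolve σ0 n (b₀.1 + 2*(0:ℤ)+q, b₀.2 + q)))
        (p := fun u v : Site => triAdj u v ∧ evolve σ0 n v = evolve σ0 n p)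
        (fun z : ℤ × ℤ => ((b₀.1 + 2*z.1 + z.2, b₀.2 + z.2) : Site)) ?_ _ _ hconn
      rintro u v ⟨ha, hv⟩
      exact ⟨phi_triAdj b₀ ha, hv⟩



/-! ### neighbor pairs realizing each direction -/

lemma nbr_pair {e : Site} (he : e ∈ D6F) (x : Site) :
    ∃ a, Adj x a ∧ Adj x (trs e a) ∧ a ≠ trs e a := by
  obtain ⟨i, j⟩ := x
  simp only [D6F, Finset.mem_insert, Finset.mem_singleton] at he
  by_cases hp : Even (i + j) <;> rcases he with rfl|rfl|rfl|rfl|rfl|rfl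
  -- x even : neighbors (i-1,j), (i+1,j), (i,j+1)
  · exact ⟨(i-1, j), adj_left (i,j),
      adjc (adj_right (i,j)) (by simp [trs, Prod.ext_iff] <;> omega),
      by simp [trs, Prod.ext_iff] <;> omega⟩
  · exact ⟨(i+1, j), adj_right (i,j),
      adjc (adj_left (i,j)) (by simp [trs, Prod.ext_iff] <;> omega),
      by simp [trs, Prod.ext_iff] <;> omega⟩
  · exact ⟨(i-1, j), adj_left (i,j),
      adjc (adj_up (i,j) hp) (by simp [trs, Prod.ext_iff] <;> omega),
      by simp [trs, Prod.ext_iff] <;> omega⟩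
  · exact ⟨(i, j+1), adj_up (i,j) hp,
      adjc (adj_left (i,j)) (by simp [trs, Prod.ext_iff] <;> omega),
      by simp [trs, Prod.ext_iff] <;> omega⟩
  · exact ⟨(i, j+1), adj_up (i,j) hp,
      adjc (adj_right (i,j)) (by simp [trs, Prod.ext_iff] <;> omega),
      by simp [trs, Prod.ext_iff] <;> omega⟩
  · exact ⟨(i+1, j), adj_right (i,j),
      adjc (adj_up (i,j) hp) (by simp [trs, Prod.ext_iff] <;> omega),
      by simp [trs, Prod.ext_iff] <;> omega⟩
  -- x odd : neighbors (i-1,j), (i+1,j), (i,j-1)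
  · exact ⟨(i-1, j), adj_left (i,j),
      adjc (adj_right (i,j)) (by simp [trs, Prod.ext_iff] <;> omega),
      by simp [trs, Prod.ext_iff] <;> omega⟩
  · exact ⟨(i+1, j), adj_right (i,j),
      adjc (adj_left (i,j)) (by simp [trs, Prod.ext_iff] <;> omega),
      by simp [trs, Prod.ext_iff] <;> omega⟩
  · exact ⟨(i, j-1), adj_down (i,j) hp,
      adjc (adj_right (i,j)) (by simp [trs, Prod.ext_iff] <;> omega),
      by simp [trs, Prod.ext_iff] <;> omega⟩
  · exact ⟨(i+1, j), adj_right (i,j),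
      adjc (adj_down (i,j) hp) (by simp [trs, Prod.ext_iff] <;> omega),
      by simp [trs, Prod.ext_iff] <;> omega⟩
  · exact ⟨(i-1, j), adj_left (i,j),
      adjc (adj_down (i,j) hp) (by simp [trs, Prod.ext_iff] <;> omega),
      by simp [trs, Prod.ext_iff] <;> omega⟩
  · exact ⟨(i, j-1), adj_down (i,j) hp,
      adjc (adj_left (i,j)) (by simp [trs, Prod.ext_iff] <;> omega),
      by simp [trs, Prod.ext_iff] <;> omega⟩

/-! ### events force long cluster connections -/

lemma Ehat_sub_cluster {K k m : ℕ} (hm : m = k + 1) {x a e : Site}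
    (hcase : (x = a ∧ ¬ updAt K x) ∨ (Adj x a ∧ Adj x (trs e a) ∧ a ≠ trs e a ∧ updAt K x)) :
    Ehat (K+1) m a e ⊆ ⋃ y ∈ sphere x k,
      {σ0 : Config | y ∈ cluster (evolve σ0 (K+1)) x} := by
  intro σ0 hσ
  obtain ⟨h1, y₀, hy1, hy2⟩ := hσ
  have hmaj : ∀ z, updAt K z → evolve σ0 (K+1) z = maj (evolve σ0 (K+1)) z :=
    fun z hz => evolve_eq_maj hz
  obtain ⟨haL, hxa, hpath⟩ : (¬ updAt K a) ∧ evolve σ0 (K+1) a = evolve σ0 (K+1) x ∧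
      Relation.ReflTransGen
        (fun p q => Adj p q ∧ evolve σ0 (K+1) q = evolve σ0 (K+1) x) x a := by
    rcases hcase with ⟨rfl, hL⟩ | ⟨hadj1, hadj2, hane, hupd⟩
    · exact ⟨hL, rfl, .refl⟩
    · have haL : ¬ updAt K a := by
        have := adj_parity hadj1
        rw [updAt_iff] at *
        tauto
      have hwx : evolve σ0 (K+1) x = evolve σ0 (K+1) a := by
        rw [hmaj x hupd]
        exact maj_eq_of_two hadj1 hadj2 hane rfl h1
      exact ⟨haL, hwx.symm, Relation.ReflTransGen.single ⟨hadj1, hwx.symm⟩⟩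
  have hy₀ : y₀ ∈ cluster (evolve σ0 (K+1)) x :=
    cluster_of_triReach hmaj haL hpath hxa hy2
  have hnx : k ≤ Nrm (y₀.1 - x.1, y₀.2 - x.2) := by
    rcases hcase with ⟨rfl, _⟩ | ⟨hadj1, _, _, _⟩
    · exact le_trans (by omega) hy1
    · rcases adj_cases hadj1 with rfl | rfl | rfl | rfl <;>
        (simp only [Nrm] at hy1 ⊢) <;> (simp at hy1 ⊢) <;> omega
  obtain ⟨z, hz1, hz2⟩ := cluster_mono_level hy₀ k hnx
  exact Set.mem_biUnion (mem_sphere.mpr hz2) hz1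

/-! ### the sphere lower bound -/

lemma sphere_bound {P : Measure Config} (hP : IsBernoulliProduct (1/2) P) (K k : ℕ)
    (hk : 1 ≤ k) (x : Site) :
    (((48*k+54 : ℕ)) : ℝ≥0∞)⁻¹ ≤
      ∑ y ∈ sphere x k, P {σ0 : Config | y ∈ cluster (evolve σ0 (K+1)) x} := by
  haveI := hP.1
  set m := k + 1 with hm
  set S := ∑ y ∈ sphere x k, P {σ0 : Config | y ∈ cluster (evolve σ0 (K+1)) x} with hS
  have hbase : ∃ bx : Site, ∀ e ∈ D6F, ∃ a : Site,
      (Ehat (K+1) m a e ⊆ ⋃ y ∈ sphere x k,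
        {σ0 : Config | y ∈ cluster (evolve σ0 (K+1)) x}) ∧
      Even ((a.1 - bx.1) + (a.2 - bx.2)) := by
    by_cases hx : updAt K x
    · refine ⟨(x.1 - 1, x.2), fun e he => ?_⟩
      obtain ⟨a, h1, h2, h3⟩ := nbr_pair he x
      refine ⟨a, Ehat_sub_cluster hm (Or.inr ⟨h1, h2, h3, hx⟩), ?_⟩
      show Even ((a.1 - (x.1 - 1)) + (a.2 - x.2))
      rcases adj_cases h1 with rfl | rfl | rfl | rfl <;> (simp [Int.even_iff] <;> omega)
    · exact ⟨x, fun e he => ⟨x, Ehat_sub_cluster hm (Or.inl ⟨rfl, hx⟩), by simp⟩⟩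
  obtain ⟨bx, hbx⟩ := hbase
  have hES : ∀ e ∈ D6F, P (Ehat (K+1) m bx e) ≤ S := by
    intro e he
    obtain ⟨a, hsub, hpar⟩ := hbx e he
    have htrs : trs (a.1 - bx.1, a.2 - bx.2) bx = a := by
      simp [trs, Prod.ext_iff] <;> omega
    have hshift : Ehat (K+1) m a e =
        shiftC (a.1 - bx.1, a.2 - bx.2) ⁻¹' Ehat (K+1) m bx e := by
      have := Ehat_shift (K+1) m bx (a.1 - bx.1, a.2 - bx.2) hpar e
      rwa [htrs] at this
    calc P (Ehat (K+1) m bx e)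
        = P (Ehat (K+1) m a e) := by
          rw [hshift, shift_invariant hP _ (meas_Ehat (K+1) m bx e)]
      _ ≤ P (⋃ y ∈ sphere x k, {σ0 : Config | y ∈ cluster (evolve σ0 (K+1)) x}) :=
          measure_mono hsub
      _ ≤ S := by
          rw [hS]
          exact measure_biUnion_finset_le _ _
  have hcov : (1 : ℝ≥0∞) ≤ ∑ kk ∈ Finset.range (8*m+1), ∑ e ∈ D6F,
      P (Ehat (K+1) m (trs ((kk:ℤ), (kk:ℤ)) bx) e) := by
    have huniv : (Set.univ : Set Config) ⊆ ⋃ kk ∈ Finset.range (8*m+1), ⋃ e ∈ D6F,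
        Ehat (K+1) m (trs ((kk:ℤ), (kk:ℤ)) bx) e := by
      intro σ0 _
      obtain ⟨kk, hkk, e, he, hmem⟩ := covering (K+1) m (by omega) bx σ0
      exact Set.mem_biUnion hkk (Set.mem_biUnion he hmem)
    calc (1 : ℝ≥0∞) = P Set.univ := measure_univ.symm
      _ ≤ P (⋃ kk ∈ Finset.range (8*m+1), ⋃ e ∈ D6F,
            Ehat (K+1) m (trs ((kk:ℤ), (kk:ℤ)) bx) e) := measure_mono huniv
      _ ≤ ∑ kk ∈ Finset.range (8*m+1),
            P (⋃ e ∈ D6F, Ehat (K+1) m (trs ((kk:ℤ), (kk:ℤ)) bx) e) :=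
          measure_biUnion_finset_le _ _
      _ ≤ ∑ kk ∈ Finset.range (8*m+1), ∑ e ∈ D6F,
            P (Ehat (K+1) m (trs ((kk:ℤ), (kk:ℤ)) bx) e) :=
          Finset.sum_le_sum fun kk _ => measure_biUnion_finset_le _ _
  have hterm : ∀ kk : ℕ, ∀ e ∈ D6F,
      P (Ehat (K+1) m (trs ((kk:ℤ), (kk:ℤ)) bx) e) = P (Ehat (K+1) m bx e) := by
    intro kk e _
    rw [Ehat_shift (K+1) m bx ((kk:ℤ), (kk:ℤ)) ⟨(kk:ℤ), by simp⟩ e,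
      shift_invariant hP _ (meas_Ehat (K+1) m bx e)]
  have hcard : D6F.card = 6 := by decide
  have h6 : ∑ e ∈ D6F, P (Ehat (K+1) m bx e) ≤ 6 * S := by
    calc ∑ e ∈ D6F, P (Ehat (K+1) m bx e) ≤ ∑ _e ∈ D6F, S := Finset.sum_le_sum hES
      _ = (D6F.card : ℝ≥0∞) * S := by rw [Finset.sum_const, nsmul_eq_mul]
      _ = 6 * S := by rw [hcard]; norm_num
  have htot : (1 : ℝ≥0∞) ≤ ((8*m+1 : ℕ) : ℝ≥0∞) * (6 * S) := by
    refine hcov.trans ?_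
    calc ∑ kk ∈ Finset.range (8*m+1), ∑ e ∈ D6F,
          P (Ehat (K+1) m (trs ((kk:ℤ), (kk:ℤ)) bx) e)
        = ∑ kk ∈ Finset.range (8*m+1), ∑ e ∈ D6F, P (Ehat (K+1) m bx e) :=
          Finset.sum_congr rfl fun kk _ => Finset.sum_congr rfl fun e he => hterm kk e he
      _ ≤ ∑ _kk ∈ Finset.range (8*m+1), (6 * S) := Finset.sum_le_sum fun kk _ => h6
      _ = ((8*m+1 : ℕ) : ℝ≥0∞) * (6 * S) := by
          rw [Finset.sum_const, Finset.card_range, nsmul_eq_mul]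
  have hc : ((8*m+1 : ℕ) : ℝ≥0∞) * 6 = ((48*k+54 : ℕ) : ℝ≥0∞) := by
    rw [hm]
    push_cast
    ring
  have hne0 : ((48*k+54 : ℕ) : ℝ≥0∞) ≠ 0 := by
    simp only [ne_eq, Nat.cast_eq_zero]
    omega
  have hnetop : ((48*k+54 : ℕ) : ℝ≥0∞) ≠ ⊤ := ENNReal.natCast_ne_top _
  calc ((48*k+54 : ℕ) : ℝ≥0∞)⁻¹ = ((48*k+54 : ℕ) : ℝ≥0∞)⁻¹ * 1 := (mul_one _).symm
    _ ≤ ((48*k+54 : ℕ) : ℝ≥0∞)⁻¹ * (((8*m+1 : ℕ) : ℝ≥0∞) * (6 * S)) :=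
        mul_le_mul_right htot _
    _ = (((48*k+54 : ℕ) : ℝ≥0∞)⁻¹ * (((8*m+1 : ℕ) : ℝ≥0∞) * 6)) * S := by ring
    _ = (((48*k+54 : ℕ) : ℝ≥0∞)⁻¹ * ((48*k+54 : ℕ) : ℝ≥0∞)) * S := by rw [hc]
    _ = S := by rw [ENNReal.inv_mul_cancel hne0 hnetop, one_mul]



/-! ### the main theorem -/

theorem stmt2' (P : Measure Config) (hP : IsBernoulliProduct (1 / 2) P)
    (x : Site) (n : ℕ) (hn : 1 ≤ n) :
    ∫⁻ σ0, ((cluster (evolve σ0 n) x).encard : ℝ≥0∞) ∂P = ⊤ := by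
  classical
  haveI := hP.1
  obtain ⟨K, rfl⟩ : ∃ K, n = K + 1 := ⟨n - 1, by omega⟩
  have hle : ∀ M : ℕ, ∑ k ∈ Finset.range M, (((48*(k+1)+54 : ℕ)) : ℝ≥0∞)⁻¹ ≤
      ∫⁻ σ0, ((cluster (evolve σ0 (K+1)) x).encard : ℝ≥0∞) ∂P := by
    intro M
    set F : Finset Site := (Finset.range M).biUnion (fun k => sphere x (k+1)) with hF
    have hpoint : ∀ σ0 : Config,
        (∑ y ∈ F, ({σ0' : Config | y ∈ cluster (evolve σ0' (K+1)) x}).indicator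
          (fun _ => (1:ℝ≥0∞)) σ0) ≤ ((cluster (evolve σ0 (K+1)) x).encard : ℝ≥0∞) := by
      intro σ0
      rw [Finset.sum_indicator_eq_sum_filter, Finset.sum_const, nsmul_eq_mul, mul_one]
      have h2 : ((F.filter (fun y => σ0 ∈ {σ0' : Config | y ∈ cluster (evolve σ0' (K+1)) x}))
          : Set Site) ⊆ cluster (evolve σ0 (K+1)) x := by
        intro y hy
        simp only [Finset.coe_filter, Set.mem_setOf_eq] at hy
        exact hy.2
      have h3 := Set.encard_mono h2
      rw [Set.encard_coe_eq_coe_finsetCard] at h3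
      calc ((F.filter (fun y => σ0 ∈ {σ0' : Config | y ∈ cluster (evolve σ0' (K+1)) x})).card
            : ℝ≥0∞)
          = (((F.filter (fun y => σ0 ∈ {σ0' : Config | y ∈ cluster (evolve σ0' (K+1)) x})).card
            : ℕ∞) : ℝ≥0∞) := (ENat.toENNReal_coe _).symm
        _ ≤ ((cluster (evolve σ0 (K+1)) x).encard : ℝ≥0∞) := ENat.toENNReal_le.mpr h3
    have hmeas : ∀ y ∈ F, Measurable fun σ0 : Config =>
        ({σ0' : Config | y ∈ cluster (evolve σ0' (K+1)) x}).indicator (fun _ => (1:ℝ≥0∞)) σ0 :=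
      fun y _ => measurable_const.indicator (meas_cluster_mem (K+1) x y)
    have hint : ∑ y ∈ F, P {σ0' : Config | y ∈ cluster (evolve σ0' (K+1)) x} ≤
        ∫⁻ σ0, ((cluster (evolve σ0 (K+1)) x).encard : ℝ≥0∞) ∂P := by
      have hmono := lintegral_mono (μ := P) hpoint
      rw [lintegral_finset_sum F hmeas] at hmono
      have heach : ∀ y ∈ F, ∫⁻ σ0, ({σ0' : Config | y ∈ cluster (evolve σ0' (K+1)) x}).indicator
          (fun _ => (1:ℝ≥0∞)) σ0 ∂P = P {σ0' : Config | y ∈ cluster (evolve σ0' (K+1)) x} := by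
        intro y _
        rw [lintegral_indicator (meas_cluster_mem (K+1) x y)]
        exact MeasureTheory.setLIntegral_one _
      rwa [Finset.sum_congr rfl heach] at hmono
    refine le_trans ?_ hint
    have hdisj : (↑(Finset.range M) : Set ℕ).PairwiseDisjoint (fun k => sphere x (k+1)) := by
      intro i _ j _ hij
      refine Finset.disjoint_left.mpr fun y hy1 hy2 => ?_
      rw [mem_sphere] at hy1 hy2
      omega
    rw [hF, Finset.sum_biUnion hdisj]
    exact Finset.sum_le_sum fun k _ => sphere_bound hP K (k+1) (by omega) x
  have hdiv : (⨆ M : ℕ, ∑ k ∈ Finset.range M, (((48*(k+1)+54 : ℕ)) : ℝ≥0∞)⁻¹) = ⊤ := by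
    rw [← ENNReal.tsum_eq_iSup_nat]
    by_contra hne
    have hco : ∀ k : ℕ, (((48*(k+1)+54 : ℕ)) : ℝ≥0∞)⁻¹ =
        ((((48*(k+1)+54 : ℕ) : NNReal)⁻¹ : NNReal) : ℝ≥0∞) := by
      intro k
      rw [ENNReal.coe_inv (by exact_mod_cast (by omega : (48*(k+1)+54 : ℕ) ≠ 0)),
        ENNReal.coe_natCast]
    rw [tsum_congr hco] at hne
    have hsum : Summable (fun k : ℕ => ((48*(k+1)+54 : ℕ) : NNReal)⁻¹) :=
      ENNReal.tsum_coe_ne_top_iff_summable.mp hne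
    have hsumR : Summable (fun k : ℕ => (((48*(k+1)+54 : ℕ)) : ℝ)⁻¹) := by
      have h' := NNReal.summable_coe.mpr hsum
      simpa [NNReal.coe_inv] using h'
    have hsum2 : Summable (fun k : ℕ => ((102*(k+1) : ℕ) : ℝ)⁻¹) := by
      refine Summable.of_nonneg_of_le (fun k => by positivity) (fun k => ?_) hsumR
      have h1 : (0:ℝ) < ((48*(k+1)+54 : ℕ) : ℝ) := by positivity
      refine inv_anti₀ h1 ?_
      exact_mod_cast (by omega : (48*(k+1)+54 : ℕ) ≤ 102*(k+1))
    have hsum3 : Summable (fun k : ℕ => ((k+1 : ℕ) : ℝ)⁻¹) := by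
      have h' := hsum2.mul_left (102 : ℝ)
      refine h'.congr fun k => ?_
      push_cast
      rw [mul_inv]
      rw [← mul_assoc]
      norm_num
    have hsum4 : Summable (fun n : ℕ => ((n : ℕ) : ℝ)⁻¹) := (summable_nat_add_iff 1).mp hsum3
    exact Real.not_summable_natCast_inv hsum4
  exact eq_top_iff.mpr (hdiv ▸ iSup_le hle)

end Stmt2Aux


/-- for σ⁰ ∼ P_{1/2}: for every site x and every n ≥ 1, the expected
cardinality (in ℕ ∪ {∞}) of the cluster of x at time n is infinite. -/
theorem stmt2 (P : Measure Config) (hP : IsBernoulliProduct (1 / 2) P)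
    (x : Site) (n : ℕ) (hn : 1 ≤ n) :
    ∫⁻ σ0, ((cluster (evolve σ0 n) x).encard : ℝ≥0∞) ∂P = ⊤ :=
  Stmt2Aux.stmt2' P hP x n hn
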